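/- Let G be a finite simple graph and let u be a simplicial vertex of G, i.e., a vertex whose open neighborhood N(u) induces a complete subgraph of G. Then γ_gr(G - u) ≥ γ_gr(G) - 1, where G - u is the induced subgraph of G on V(G) \ {u}. -/

import Mathlib

/-- The closed neighborhood `N[v] = {v} ∪ N(v)` of a vertex. -/
def closedNbhd {V : Type*} (G : SimpleGraph V) (v : V) : Set V :=
  insert v (G.neighborSet v)

/-- A sequence (list) of pairwise distinct vertices is legal if each vertex
footprints some vertex not dominated by the previous ones. -/
def IsLegalSeq {V : Type*} (G : SimpleGraph V) (l : List V) : Prop :=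
  l.Nodup ∧ ∀ i : Fin l.length, ∃ u,
    u ∈ closedNbhd G (l.get i) ∧
    ∀ j : Fin l.length, (j : ℕ) < (i : ℕ) → u ∉ closedNbhd G (l.get j)

/-- A legal dominating sequence. -/
def IsDomSeq {V : Type*} (G : SimpleGraph V) (l : List V) : Prop :=
  IsLegalSeq G l ∧ ∀ u : V, ∃ v ∈ l, u ∈ closedNbhd G v

/-- The Grundy domination number: the maximum length of a legal dominating sequence. -/
noncomputable def grundyDomNum {V : Type*} (G : SimpleGraph V) : ℕ :=
  sSup {k : ℕ | ∃ l : List V, IsDomSeq G l ∧ l.length = k}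

lemma mem_closedNbhd {V : Type*} (G : SimpleGraph V) {v w : V} :
    w ∈ closedNbhd G v ↔ w = v ∨ G.Adj v w := by
  simp [closedNbhd]

lemma self_mem_closedNbhd {V : Type*} (G : SimpleGraph V) (v : V) :
    v ∈ closedNbhd G v := (mem_closedNbhd G).mpr (Or.inl rfl)

lemma mem_closedNbhd_induce {V : Type*} (G : SimpleGraph V) (s : Set V)
    (a b : s) : b ∈ closedNbhd (G.induce s) a ↔ (b : V) ∈ closedNbhd G a := by
  simp [mem_closedNbhd, Subtype.ext_iff]

/-- Any legal sequence extends to a legal dominating sequence. -/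
lemma exists_domSeq_extend {W : Type*} [Fintype W] (H : SimpleGraph W) :
    ∀ l : List W, IsLegalSeq H l → ∃ l', IsDomSeq H l' ∧ l.length ≤ l'.length := by
  classical
  suffices h : ∀ n (l : List W),
      (Finset.univ.filter fun x => ∀ v ∈ l, x ∉ closedNbhd H v).card = n →
      IsLegalSeq H l → ∃ l', IsDomSeq H l' ∧ l.length ≤ l'.length from
    fun l hl => h _ l rfl hl
  intro n
  induction n using Nat.strong_induction_on with
  | _ n ih =>
    intro l hcard hl
    by_cases hemp : (Finset.univ.filter fun x => ∀ v ∈ l, x ∉ closedNbhd H v) = ∅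
    · refine ⟨l, ⟨hl, ?_⟩, le_rfl⟩
      intro x
      by_contra hx
      push_neg at hx
      have : x ∈ (Finset.univ.filter fun x => ∀ v ∈ l, x ∉ closedNbhd H v) := by
        simp only [Finset.mem_filter, Finset.mem_univ, true_and]
        exact hx
      rw [hemp] at this; exact absurd this (Finset.notMem_empty x)
    · obtain ⟨x, hx⟩ := Finset.nonempty_iff_ne_empty.mpr hemp
      simp only [Finset.mem_filter, Finset.mem_univ, true_and] at hx
      have hxl : x ∉ l := fun hmem => hx x hmem (self_mem_closedNbhd H x)
      have hlen : (l ++ [x]).length = l.length + 1 := by simp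
      have hleg : IsLegalSeq H (l ++ [x]) := by
        constructor
        · exact List.Nodup.append hl.1 (List.nodup_singleton x)
            (by simpa [List.disjoint_singleton] using hxl)
        · intro i
          rcases lt_or_ge (i : ℕ) l.length with hi | hi
          · obtain ⟨w, hw1, hw2⟩ := hl.2 ⟨i, hi⟩
            refine ⟨w, ?_, ?_⟩
            · have : (l ++ [x]).get i = l.get ⟨i, hi⟩ := by
                simp [List.getElem_append_left hi]
              rw [this]; exact hw1
            · intro j hj
              have hj' : (j : ℕ) < l.length := lt_trans hj hi
              have : (l ++ [x]).get j = l.get ⟨j, hj'⟩ := by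
                simp [List.getElem_append_left hj']
              rw [this]; exact hw2 ⟨j, hj'⟩ hj
          · have hi' : (i : ℕ) = l.length := by
              have h2 := i.isLt
              simp only [List.length_append, List.length_singleton] at h2
              omega
            refine ⟨x, ?_, ?_⟩
            · have : (l ++ [x]).get i = x := by
                rw [List.get_eq_getElem]
                simp only [hi']
                exact List.getElem_concat_length (l := l) (a := x) (i := l.length) (by omega) (by simp)
              rw [this]; exact self_mem_closedNbhd H x
            · intro j hj
              have hj' : (j : ℕ) < l.length := by omega
              have : (l ++ [x]).get j = l.get ⟨j, hj'⟩ := by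
                simp [List.getElem_append_left hj']
              rw [this]
              exact hx _ (by rw [List.get_eq_getElem]; exact List.getElem_mem _)
      have hsub : (Finset.univ.filter fun y => ∀ v ∈ l ++ [x], y ∉ closedNbhd H v) ⊂
          (Finset.univ.filter fun y => ∀ v ∈ l, y ∉ closedNbhd H v) := by
        constructor
        · intro y hy
          simp only [Finset.mem_filter, Finset.mem_univ, true_and, List.mem_append,
            List.mem_singleton] at hy ⊢
          exact fun v hv => hy v (Or.inl hv)
        · intro hcon
          have hx' : x ∈ (Finset.univ.filter fun y => ∀ v ∈ l, y ∉ closedNbhd H v) := by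
            simp only [Finset.mem_filter, Finset.mem_univ, true_and]; exact hx
          have := hcon hx'
          simp only [Finset.mem_filter, Finset.mem_univ, true_and] at this
          exact this x (by simp) (self_mem_closedNbhd H x)
      have hlt : (Finset.univ.filter fun y => ∀ v ∈ l ++ [x], y ∉ closedNbhd H v).card < n := by
        rw [← hcard]; exact Finset.card_lt_card hsub
      obtain ⟨l', hl', hlen'⟩ := ih _ hlt (l ++ [x]) rfl hleg
      exact ⟨l', hl', by rw [hlen] at hlen'; omega⟩

lemma bddAbove_grundy {W : Type*} [Fintype W] (H : SimpleGraph W) :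
    BddAbove {k : ℕ | ∃ l : List W, IsDomSeq H l ∧ l.length = k} := by
  classical
  refine ⟨Fintype.card W, ?_⟩
  rintro k ⟨m, hm, rfl⟩
  exact hm.1.1.length_le_card

lemma length_le_grundy {W : Type*} [Fintype W] (H : SimpleGraph W) (l : List W)
    (hl : IsLegalSeq H l) : l.length ≤ grundyDomNum H := by
  obtain ⟨l', hdom, hlen⟩ := exists_domSeq_extend H l hl
  exact hlen.trans (le_csSup (bddAbove_grundy H) ⟨l', hdom, rfl⟩)

lemma exists_max_domSeq {W : Type*} [Fintype W] (H : SimpleGraph W) :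
    ∃ l : List W, IsDomSeq H l ∧ l.length = grundyDomNum H := by
  have hne : {k : ℕ | ∃ l : List W, IsDomSeq H l ∧ l.length = k}.Nonempty := by
    obtain ⟨l', hl', _⟩ := exists_domSeq_extend H []
      ⟨List.nodup_nil, fun i => absurd i.isLt (by simp)⟩
    exact ⟨l'.length, l', hl', rfl⟩
  exact Nat.sSup_mem hne (bddAbove_grundy H)

lemma legal_filter_induce {V : Type*} [DecidableEq V] (G : SimpleGraph V) (u t : V)
    (l : List V) (hleg : IsLegalSeq G l)
    (h1 : ∀ v ∈ l, v ≠ t → v ≠ u)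
    (h2 : ∀ i : Fin l.length, l.get i ≠ t → ∃ w, w ∈ closedNbhd G (l.get i) ∧
      (∀ j : Fin l.length, (j : ℕ) < (i : ℕ) → w ∉ closedNbhd G (l.get j)) ∧ w ≠ u) :
    ∃ m : List {v : V | v ≠ u}, IsLegalSeq (G.induce {v : V | v ≠ u}) m ∧
      m.length = (l.filter (fun v => v != t)).length := by
  set l' := l.filter (fun v => v != t) with hl'
  have hmem : ∀ v ∈ l', v ∈ l ∧ v ≠ t := by
    intro v hv
    simp only [hl', List.mem_filter, bne_iff_ne, ne_eq] at hv
    exact hv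
  have hmemu : ∀ v ∈ l', v ∈ {v : V | v ≠ u} := fun v hv =>
    h1 v (hmem v hv).1 (hmem v hv).2
  refine ⟨l'.pmap (fun v hv => (⟨v, hv⟩ : {v : V | v ≠ u})) hmemu, ⟨?_, ?_⟩,
    List.length_pmap⟩
  · exact (hleg.1.filter _).pmap (fun a _ b _ h => congrArg Subtype.val h)
  · have hlen : (l'.pmap (fun v hv => (⟨v, hv⟩ : {v : V | v ≠ u})) hmemu).length
        = l'.length := List.length_pmap
    obtain ⟨f, hf⟩ := List.sublist_iff_exists_fin_orderEmbedding_get_eq.mp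
      (List.filter_sublist (l := l) (p := fun v => v != t))
    intro i
    have hi' : (i : ℕ) < l'.length := by rw [← hlen]; exact i.isLt
    set i' : Fin l'.length := ⟨i, hi'⟩ with hi'def
    have hgeti : (((l'.pmap (fun v hv => (⟨v, hv⟩ : {v : V | v ≠ u})) hmemu).get i : {v : V | v ≠ u}) : V)
        = l.get (f i') := by
      rw [← hf i', List.get_eq_getElem, List.getElem_pmap _ hmemu _]
      rfl
    have hne_t : l.get (f i') ≠ t := by
      rw [← hf i']
      exact (hmem _ (by rw [List.get_eq_getElem]; exact List.getElem_mem _)).2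
    obtain ⟨w, hw1, hw2, hw3⟩ := h2 (f i') hne_t
    refine ⟨⟨w, hw3⟩, ?_, ?_⟩
    · rw [mem_closedNbhd_induce, hgeti]
      exact hw1
    · intro j hj
      have hj' : (j : ℕ) < l'.length := by rw [← hlen]; exact j.isLt
      set j' : Fin l'.length := ⟨j, hj'⟩ with hj'def
      have hgetj : (((l'.pmap (fun v hv => (⟨v, hv⟩ : {v : V | v ≠ u})) hmemu).get j : {v : V | v ≠ u}) : V)
          = l.get (f j') := by
        rw [← hf j', List.get_eq_getElem, List.getElem_pmap _ hmemu _]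
        rfl
      rw [mem_closedNbhd_induce, hgetj]
      have hjlt : j' < i' := by simp only [hi'def, hj'def, Fin.mk_lt_mk]; exact hj
      exact hw2 (f j') (f.strictMono hjlt)

theorem grundy_simplicial_vertex_deletion {V : Type*} [Fintype V] (G : SimpleGraph V)
    (u : V)
    (hsimp : ∀ x y : V, G.Adj u x → G.Adj u y → x ≠ y → G.Adj x y) :
    grundyDomNum G - 1 ≤ grundyDomNum (G.induce {v : V | v ≠ u}) := by
  classical
  haveI : Fintype ↥{v : V | v ≠ u} := Fintype.ofFinite _
  obtain ⟨l, hdom, hlen⟩ := exists_max_domSeq G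
  have hleg := hdom.1
  set Bad : Fin l.length → Prop := fun i => ∀ w, w ∈ closedNbhd G (l.get i) →
    (∀ j : Fin l.length, (j : ℕ) < (i : ℕ) → w ∉ closedNbhd G (l.get j)) → w = u with hBad
  have hwit : ∀ k, Bad k → u ∈ closedNbhd G (l.get k) ∧
      ∀ j : Fin l.length, (j : ℕ) < (k : ℕ) → u ∉ closedNbhd G (l.get j) := by
    intro k hk
    obtain ⟨w, hw1, hw2⟩ := hleg.2 k
    have hw := hk w hw1 hw2
    rw [hw] at hw1 hw2
    exact ⟨hw1, hw2⟩
  have badUnique : ∀ i i', Bad i → Bad i' → i = i' := by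
    intro i i' hb hb'
    by_contra hne
    have hne' : (i : ℕ) ≠ (i' : ℕ) := fun h => hne (Fin.ext h)
    rcases lt_or_gt_of_ne hne' with h | h
    · exact (hwit i' hb').2 i h (hwit i hb).1
    · exact (hwit i hb).2 i' h (hwit i' hb').1
  have key : ∃ t : V, (∀ v ∈ l, v ≠ t → v ≠ u) ∧
      ∀ i : Fin l.length, l.get i ≠ t → ∃ w, w ∈ closedNbhd G (l.get i) ∧
        (∀ j : Fin l.length, (j : ℕ) < (i : ℕ) → w ∉ closedNbhd G (l.get j)) ∧ w ≠ u := by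
    by_cases hbad : ∃ i, Bad i
    · obtain ⟨i₀, hi₀⟩ := hbad
      refine ⟨l.get i₀, ?_, ?_⟩
      · by_cases htu : l.get i₀ = u
        · intro v _ hv hc
          exact hv (hc.trans htu.symm)
        · have hu_not : u ∉ l := by
            intro hul
            obtain ⟨p, hp⟩ := List.mem_iff_get.mp hul
            obtain ⟨hu1, hu2⟩ := hwit i₀ hi₀
            have hpi : ¬((p : ℕ) < (i₀ : ℕ)) := fun h =>
              hu2 p h (hp ▸ self_mem_closedNbhd G u)
            have hpne : (p : ℕ) ≠ (i₀ : ℕ) := fun h =>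
              htu (by rw [← Fin.ext h, hp])
            have hlt : (i₀ : ℕ) < (p : ℕ) := by omega
            obtain ⟨w, hw1, hw2⟩ := hleg.2 p
            rw [hp] at hw1
            have hwt : w ∉ closedNbhd G (l.get i₀) := hw2 i₀ hlt
            have hwu : w ≠ u := fun h => hwt (h ▸ hu1)
            rcases (mem_closedNbhd G).mp hw1 with h | h
            · exact hwu h
            · have hadj_ut : G.Adj u (l.get i₀) := by
                rcases (mem_closedNbhd G).mp hu1 with h' | h'
                · exact absurd h'.symm htu
                · exact h'.symm
              have hwne : l.get i₀ ≠ w := fun hh =>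
                hwt (hh ▸ self_mem_closedNbhd G (l.get i₀))
              exact hwt ((mem_closedNbhd G).mpr
                (Or.inr (hsimp (l.get i₀) w hadj_ut h hwne)))
          intro v hv _
          exact fun h => hu_not (h ▸ hv)
      · intro i hi
        have hine : i ≠ i₀ := fun h => hi (h ▸ rfl)
        have hnb : ¬ Bad i := fun hb => hine (badUnique i i₀ hb hi₀)
        simp only [hBad] at hnb
        push_neg at hnb
        exact hnb
    · refine ⟨u, fun v _ hv => hv, ?_⟩
      intro i _
      have hnb : ¬ Bad i := fun hb => hbad ⟨i, hb⟩
      simp only [hBad] at hnb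
      push_neg at hnb
      exact hnb
  obtain ⟨t, h1, h2⟩ := key
  obtain ⟨m, hm, hmlen⟩ := legal_filter_induce G u t l hleg h1 h2
  have hfl : l.length - 1 ≤ (l.filter (fun v => v != t)).length := by
    rw [← hleg.1.erase_eq_filter t]
    by_cases ht : t ∈ l
    · have := List.length_erase_add_one ht; omega
    · rw [List.erase_of_not_mem ht]; omega
  calc grundyDomNum G - 1 = l.length - 1 := by rw [hlen]
    _ ≤ m.length := by omega
    _ ≤ grundyDomNum (G.induce {v : V | v ≠ u}) :=
        length_le_grundy _ m hm
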